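/- If μ is a probability measure on a locally compact abelian group G with independent powers, then the unit circle {z ∈ ℂ : |z| = 1} is contained in the spectrum σ(μ) of μ in M(G). -/

import Mathlib

open MeasureTheory Filter Topology WeakDual

noncomputable section

variable {G : Type*} [CommGroup G] [TopologicalSpace G] [IsTopologicalGroup G]
  [MeasurableSpace G] [BorelSpace G]

/-- The Fourier–Stieltjes transform of a measure: `μ̂ (γ) = ∫ γ(-x) dμ(x)`. -/
def FS (μ : Measure G) (γ : PontryaginDual G) : ℂ :=
  ∫ x, ((γ x⁻¹ : Circle) : ℂ) ∂μ

/-- Convolution of two measures on the (multiplicative) group `G`. -/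
def mconv (μ ν : Measure G) : Measure G :=
  Measure.map (fun p : G × G => p.1 * p.2) (μ.prod ν)

/-- Convolution powers of a measure: `convPow μ 0 = δ₁`, `convPow μ (n+1) = μ ∗ convPow μ n`. -/
def convPow (μ : Measure G) : ℕ → Measure G
  | 0 => Measure.dirac 1
  | n + 1 => mconv μ (convPow μ n)

/-- `μ` has independent powers: all distinct convolution powers of `μ` are mutually singular. -/
def HasIndependentPowers (μ : Measure G) : Prop :=
  ∀ m n : ℕ, 0 < m → 0 < n → m ≠ n → (convPow μ m).MutuallySingular (convPow μ n)

open Classical in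
/-- A finite (positive) measure, viewed as a complex measure. -/
def toCM (μ : Measure G) : ComplexMeasure G :=
  if h : IsFiniteMeasure μ then
    (@Measure.toSignedMeasure G _ μ h).mapRange Complex.ofRealHom.toAddMonoidHom
      Complex.continuous_ofReal
  else 0

/- ---------- auxiliary lemmas ---------- -/

lemma toCM_apply (ρ : Measure G) [h : IsFiniteMeasure ρ] {s : Set G} (hs : MeasurableSet s) :
    toCM ρ s = ((ρ s).toReal : ℂ) := by
  rw [toCM, dif_pos h, VectorMeasure.mapRange_apply,
    Measure.toSignedMeasure_apply_measurable hs]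
  rfl

lemma convPow_zero (μ : Measure G) : convPow μ 0 = Measure.dirac 1 := rfl

lemma convPow_succ (μ : Measure G) (n : ℕ) : convPow μ (n + 1) = mconv μ (convPow μ n) := rfl

lemma mconv_univ [MeasurableMul₂ G] (ρ ν : Measure G) [SFinite ν] :
    mconv ρ ν Set.univ = ρ Set.univ * ν Set.univ := by
  rw [mconv, Measure.map_apply measurable_mul MeasurableSet.univ, Set.preimage_univ,
    ← Set.univ_prod_univ, Measure.prod_prod]

lemma mconv_finite [MeasurableMul₂ G] (ρ ν : Measure G) [IsFiniteMeasure ρ]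
    [IsFiniteMeasure ν] : IsFiniteMeasure (mconv ρ ν) := by
  constructor
  rw [mconv_univ]
  exact ENNReal.mul_lt_top (measure_lt_top ρ _) (measure_lt_top ν _)

lemma convPow_prob [MeasurableMul₂ G] (μ : Measure G) [IsProbabilityMeasure μ] :
    ∀ n, IsProbabilityMeasure (convPow μ n)
  | 0 => by rw [convPow_zero]; infer_instance
  | n + 1 => by
      haveI := convPow_prob μ n
      constructor
      rw [convPow_succ, mconv_univ, measure_univ, measure_univ, one_mul]

/-- Every complex measure is a complex linear combination of (complexified) finite positive
measures, via the Jordan decompositions of its real and imaginary parts. -/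
lemma cm_decomp (ξ : ComplexMeasure G) :
    ∃ (ρ₁ ρ₂ ρ₃ ρ₄ : Measure G), IsFiniteMeasure ρ₁ ∧ IsFiniteMeasure ρ₂ ∧
      IsFiniteMeasure ρ₃ ∧ IsFiniteMeasure ρ₄ ∧
      ξ = (toCM ρ₁ - toCM ρ₂) + Complex.I • (toCM ρ₃ - toCM ρ₄) := by
  set s := ComplexMeasure.re ξ with hsdef
  set t := ComplexMeasure.im ξ with htdef
  refine ⟨s.toJordanDecomposition.posPart, s.toJordanDecomposition.negPart,
    t.toJordanDecomposition.posPart, t.toJordanDecomposition.negPart,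
    inferInstance, inferInstance, inferInstance, inferInstance, ?_⟩
  apply VectorMeasure.ext
  intro i hi
  have hs' : s i = (s.toJordanDecomposition.posPart i).toReal
      - (s.toJordanDecomposition.negPart i).toReal := by
    conv_lhs => rw [← s.toSignedMeasure_toJordanDecomposition]
    rw [JordanDecomposition.toSignedMeasure, VectorMeasure.sub_apply,
      Measure.toSignedMeasure_apply_measurable hi, Measure.toSignedMeasure_apply_measurable hi]
    rfl
  have ht' : t i = (t.toJordanDecomposition.posPart i).toReal
      - (t.toJordanDecomposition.negPart i).toReal := by
    conv_lhs => rw [← t.toSignedMeasure_toJordanDecomposition]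
    rw [JordanDecomposition.toSignedMeasure, VectorMeasure.sub_apply,
      Measure.toSignedMeasure_apply_measurable hi, Measure.toSignedMeasure_apply_measurable hi]
    rfl
  have hre : (ξ i).re = s i := rfl
  have him : (ξ i).im = t i := rfl
  rw [VectorMeasure.add_apply, VectorMeasure.sub_apply, VectorMeasure.smul_apply,
    VectorMeasure.sub_apply, toCM_apply _ hi, toCM_apply _ hi, toCM_apply _ hi, toCM_apply _ hi,
    smul_eq_mul]
  apply Complex.ext
  · rw [hre, hs']
    simp [Complex.add_re, Complex.sub_re, Complex.mul_re]
  · rw [him, ht']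
    simp [Complex.add_im, Complex.sub_im, Complex.mul_im]

/-- For a probability measure with independent powers on a locally compact
abelian group, the unit circle is contained in its spectrum in the measure algebra `M(G)`
(represented here by `A`). -/
theorem circle_subset_spectrum_of_independentPowers [LocallyCompactSpace G] [MeasurableMul₂ G]
    (A : Type*) [NormedCommRing A] [NormedAlgebra ℂ A] [CompleteSpace A]
    (T : ComplexMeasure G ≃ₗ[ℂ] A)
    (hT_mul : ∀ (μ ν : Measure G), IsFiniteMeasure μ → IsFiniteMeasure ν →
      T (toCM (mconv μ ν)) = T (toCM μ) * T (toCM ν))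
    (hT_one : T (toCM (Measure.dirac 1)) = 1)
    (μ : Measure G) [IsProbabilityMeasure μ]
    (hip : HasIndependentPowers μ) :
    Metric.sphere (0 : ℂ) 1 ⊆ spectrum ℂ (T (toCM μ)) := by
  intro lam hlam
  have hl : ‖lam‖ = 1 := by simpa using hlam
  by_contra hspec
  set a := T (toCM μ) with ha
  rw [spectrum.notMem_iff] at hspec
  obtain ⟨b, hb⟩ := hspec.exists_left_inv
  have hprob : ∀ n, IsProbabilityMeasure (convPow μ n) := convPow_prob μ
  -- `a ^ n` corresponds to the `n`-th convolution power
  have hTpow : ∀ n : ℕ, a ^ n = T (toCM (convPow μ n)) := by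
    intro n
    induction n with
    | zero => rw [convPow_zero, hT_one, pow_zero]
    | succ n ih =>
      haveI := hprob n
      rw [pow_succ', ih, ha, convPow_succ,
        hT_mul μ (convPow μ n) inferInstance inferInstance]
  -- disjoint carriers of the convolution powers
  have hsing : ∀ m n : ℕ, m ≠ n → ∃ s : Set G, MeasurableSet s ∧
      convPow μ (m + 1) s = 0 ∧ convPow μ (n + 1) sᶜ = 0 := fun m n h =>
    hip (m + 1) (n + 1) (Nat.succ_pos m) (Nat.succ_pos n) (by omega)
  choose S hSmeas hS0 hSc using hsing
  set E : ℕ → Set G := fun n => ⋂ m, ⋂ h : m ≠ n, S m n h with hE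
  have hEmeas : ∀ n, MeasurableSet (E n) := fun n =>
    MeasurableSet.iInter fun m => MeasurableSet.iInter fun h => hSmeas m n h
  have hEnull : ∀ m n, m ≠ n → convPow μ (m + 1) (E n) = 0 := by
    intro m n h
    exact measure_mono_null
      (Set.iInter_subset_of_subset m (Set.iInter_subset _ h)) (hS0 m n h)
  have hEco : ∀ n, convPow μ (n + 1) (E n)ᶜ = 0 := by
    intro n
    rw [hE]
    simp only [Set.compl_iInter]
    exact measure_iUnion_null fun m => measure_iUnion_null fun h => hSc m n h
  set D : ℕ → Set G := fun k => E k \ ⋃ j, ⋃ _ : j ≠ k, E j with hD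
  have hDmeas : ∀ k, MeasurableSet (D k) := fun k =>
    (hEmeas k).diff (MeasurableSet.iUnion fun j => MeasurableSet.iUnion fun _ => hEmeas j)
  have hDdisj : Pairwise (Function.onFun Disjoint D) := by
    intro k l hkl
    refine Set.disjoint_left.2 fun x hxk hxl => ?_
    exact hxl.2 (Set.mem_iUnion.2 ⟨k, Set.mem_iUnion.2 ⟨hkl, hxk.1⟩⟩)
  have hDval : ∀ n k : ℕ, convPow μ (n + 1) (D k) = if n = k then 1 else 0 := by
    intro n k
    haveI := hprob (n + 1)
    by_cases h : n = k
    · subst h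
      rw [if_pos rfl]
      have hc : convPow μ (n + 1) (D n)ᶜ = 0 := by
        have hsub : (D n)ᶜ ⊆ (E n)ᶜ ∪ ⋃ j, ⋃ _ : j ≠ n, E j := by
          intro x hx
          by_cases hxE : x ∈ E n
          · by_cases hxu : x ∈ ⋃ j, ⋃ _ : j ≠ n, E j
            · exact Or.inr hxu
            · exact absurd (⟨hxE, hxu⟩ : x ∈ D n) hx
          · exact Or.inl hxE
        refine measure_mono_null hsub (measure_union_null (hEco n) ?_)
        exact measure_iUnion_null fun j => measure_iUnion_null fun h => hEnull n j h.symm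
      exact (prob_compl_eq_zero_iff (hDmeas n)).1 hc
    · rw [if_neg h]
      exact measure_mono_null Set.diff_subset (hEnull n k h)
  -- the functional `f`
  have hDsum : ∀ ξ : ComplexMeasure G, Summable fun k => ξ (D k) :=
    fun ξ => (ξ.m_iUnion hDmeas hDdisj).summable
  have hsummable : ∀ ξ : ComplexMeasure G, Summable fun k => lam ^ (k + 1) * ξ (D k) := by
    intro ξ
    refine Summable.of_norm ?_
    have h2 : Summable fun k => ‖ξ (D k)‖ := summable_norm_iff.2 (hDsum ξ)
    simpa [norm_mul, norm_pow, hl] using h2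
  set f : A → ℂ := fun x => ∑' k, lam ^ (k + 1) * (T.symm x) (D k) with hf
  have hf_apply : ∀ x : A, f x = ∑' k, lam ^ (k + 1) * (T.symm x) (D k) := fun x => rfl
  have hf_sub : ∀ x y : A, f (x - y) = f x - f y := by
    intro x y
    rw [hf_apply, hf_apply, hf_apply, ← Summable.tsum_sub (hsummable _) (hsummable _)]
    congr 1
    funext k
    rw [map_sub, VectorMeasure.sub_apply]
    ring
  have hf_add : ∀ x y : A, f (x + y) = f x + f y := by
    intro x y
    rw [hf_apply, hf_apply, hf_apply, ← Summable.tsum_add (hsummable _) (hsummable _)]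
    congr 1
    funext k
    rw [map_add, VectorMeasure.add_apply]
    ring
  have hf_smul : ∀ (c : ℂ) (x : A), f (c • x) = c * f x := by
    intro c x
    rw [hf_apply, hf_apply, ← tsum_mul_left]
    congr 1
    funext k
    rw [_root_.map_smul, VectorMeasure.smul_apply, smul_eq_mul]
    ring
  -- value of `f` on powers of `a`
  have hfa : ∀ n : ℕ, f (a ^ (n + 1)) = lam ^ (n + 1) := by
    intro n
    haveI := hprob (n + 1)
    rw [hf_apply, hTpow (n + 1), T.symm_apply_apply]
    have hterm : ∀ k : ℕ, lam ^ (k + 1) * (toCM (convPow μ (n + 1))) (D k)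
        = if k = n then lam ^ (n + 1) else 0 := by
      intro k
      rw [toCM_apply _ (hDmeas k), hDval n k]
      by_cases h : k = n
      · subst h; simp
      · rw [if_neg fun hnk => h hnk.symm, if_neg h]
        simp
    calc (∑' k, lam ^ (k + 1) * (toCM (convPow μ (n + 1))) (D k))
        = ∑' k, if k = n then lam ^ (n + 1) else 0 := by
          congr 1; funext k; exact hterm k
      _ = lam ^ (n + 1) := by
          rw [tsum_eq_single n (fun k hk => if_neg hk)]
          simp
  -- the sequence β and its recursion
  set β : ℕ → ℂ := fun n => f (b * a ^ (n + 1)) with hβ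
  have hrec : ∀ n : ℕ, β (n + 1) = lam * β n - lam ^ (n + 1) := by
    intro n
    have hkey : b * a ^ (n + 2) = lam • (b * a ^ (n + 1)) - a ^ (n + 1) := by
      have h0 : b * (algebraMap ℂ A lam - a) * a ^ (n + 1) = a ^ (n + 1) := by
        rw [hb, one_mul]
      rw [Algebra.smul_def]
      linear_combination -h0
    show f (b * a ^ (n + 2)) = lam * f (b * a ^ (n + 1)) - lam ^ (n + 1)
    rw [hkey, hf_sub, hf_smul, hfa n]
  have hform : ∀ n : ℕ, β n = lam ^ n * β 0 - n * lam ^ n := by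
    intro n
    induction n with
    | zero => simp
    | succ n ih =>
      rw [hrec n, ih]
      push_cast
      ring
  -- uniform bound on β via the Jordan decomposition of `T.symm b`
  have hFb : ∀ (ν : Measure G), IsFiniteMeasure ν → ‖f (T (toCM ν))‖ ≤ (ν Set.univ).toReal := by
    intro ν hν
    haveI := hν
    rw [hf_apply, T.symm_apply_apply]
    have hnorm : Summable fun k => ‖lam ^ (k + 1) * (toCM ν) (D k)‖ :=
      summable_norm_iff.2 (hsummable (toCM ν))
    refine le_trans (norm_tsum_le_tsum_norm hnorm) ?_
    have heq : ∀ k : ℕ, ‖lam ^ (k + 1) * (toCM ν) (D k)‖ = (ν (D k)).toReal := by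
      intro k
      rw [toCM_apply _ (hDmeas k), norm_mul, norm_pow, hl, one_pow, one_mul,
        Complex.norm_real, Real.norm_of_nonneg ENNReal.toReal_nonneg]
    calc (∑' k, ‖lam ^ (k + 1) * (toCM ν) (D k)‖) = ∑' k, (ν (D k)).toReal := by
          congr 1; funext k; exact heq k
      _ = (∑' k, ν (D k)).toReal := (ENNReal.tsum_toReal_eq fun k => measure_ne_top ν _).symm
      _ ≤ (ν Set.univ).toReal := by
          refine ENNReal.toReal_mono (measure_ne_top ν _) ?_
          rw [← measure_iUnion hDdisj hDmeas]
          exact measure_mono (Set.subset_univ _)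
  have hFb' : ∀ (ν : Measure G), IsFiniteMeasure ν → ∀ n : ℕ,
      ‖f (T (toCM ν) * a ^ (n + 1))‖ ≤ (ν Set.univ).toReal := by
    intro ν hν n
    haveI := hν
    haveI := hprob (n + 1)
    haveI := mconv_finite ν (convPow μ (n + 1))
    rw [hTpow (n + 1), ← hT_mul ν (convPow μ (n + 1)) hν inferInstance]
    refine le_trans (hFb _ inferInstance) ?_
    rw [mconv_univ, show (convPow μ (n + 1)) Set.univ = 1 from measure_univ, mul_one]
  obtain ⟨ρ₁, ρ₂, ρ₃, ρ₄, h₁, h₂, h₃, h₄, hξ⟩ := cm_decomp (T.symm b)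
  have hbT : b = (T (toCM ρ₁) - T (toCM ρ₂)) + Complex.I • (T (toCM ρ₃) - T (toCM ρ₄)) := by
    conv_lhs => rw [← T.apply_symm_apply b, hξ]
    rw [map_add, map_sub, _root_.map_smul, map_sub]
  set C : ℝ := (ρ₁ Set.univ).toReal + (ρ₂ Set.univ).toReal + (ρ₃ Set.univ).toReal
    + (ρ₄ Set.univ).toReal with hC
  have hBound : ∀ n : ℕ, ‖β n‖ ≤ C := by
    intro n
    have hdistrib : b * a ^ (n + 1)
        = (T (toCM ρ₁) * a ^ (n + 1) - T (toCM ρ₂) * a ^ (n + 1))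
          + Complex.I • (T (toCM ρ₃) * a ^ (n + 1) - T (toCM ρ₄) * a ^ (n + 1)) := by
      rw [hbT]
      rw [add_mul, sub_mul, smul_mul_assoc, sub_mul]
    have hfval : β n = (f (T (toCM ρ₁) * a ^ (n + 1)) - f (T (toCM ρ₂) * a ^ (n + 1)))
        + Complex.I * (f (T (toCM ρ₃) * a ^ (n + 1)) - f (T (toCM ρ₄) * a ^ (n + 1))) := by
      show f (b * a ^ (n + 1)) = _
      rw [hdistrib, hf_add, hf_sub, hf_smul, hf_sub]
    have e1 := hFb' ρ₁ h₁ n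
    have e2 := hFb' ρ₂ h₂ n
    have e3 := hFb' ρ₃ h₃ n
    have e4 := hFb' ρ₄ h₄ n
    rw [hfval]
    refine le_trans (norm_add_le _ _) ?_
    have t1 : ‖f (T (toCM ρ₁) * a ^ (n + 1)) - f (T (toCM ρ₂) * a ^ (n + 1))‖
        ≤ (ρ₁ Set.univ).toReal + (ρ₂ Set.univ).toReal :=
      le_trans (norm_sub_le _ _) (add_le_add e1 e2)
    have t2 : ‖Complex.I * (f (T (toCM ρ₃) * a ^ (n + 1)) - f (T (toCM ρ₄) * a ^ (n + 1)))‖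
        ≤ (ρ₃ Set.univ).toReal + (ρ₄ Set.univ).toReal := by
      rw [norm_mul, Complex.norm_I, one_mul]
      exact le_trans (norm_sub_le _ _) (add_le_add e3 e4)
    rw [hC]
    linarith
  -- blow-up of β : contradiction
  obtain ⟨N, hN⟩ := exists_nat_gt (C + ‖β 0‖)
  have h1 := hBound N
  have h2 := hform N
  have h3 : (N : ℝ) - ‖β 0‖ ≤ ‖β N‖ := by
    rw [h2]
    have hrw : lam ^ N * β 0 - (N : ℂ) * lam ^ N
        = lam ^ N * (β 0 - (N : ℂ)) := by ring
    rw [hrw, norm_mul, norm_pow, hl, one_pow, one_mul]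
    have h4 : ‖(N : ℂ)‖ - ‖β 0‖ ≤ ‖β 0 - (N : ℂ)‖ := by
      rw [norm_sub_rev]
      exact norm_sub_norm_le _ _
    rw [Complex.norm_natCast] at h4
    exact h4
  linarith
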